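/- The extreme points of the closed unit ball of the real Banach space B_s(H) of bounded self-adjoint operators (with the operator norm) are exactly the self-adjoint unitaries, i.e., operators of the form 2P − I where P is a projection. -/

import Mathlib

set_option maxHeartbeats 1000000
set_option synthInstance.maxHeartbeats 400000

open RCLike ContinuousLinearMap in
private lemma aux_extreme {H : Type*} [NormedAddCommGroup H] [InnerProductSpace ℂ H]
    [CompleteSpace H] (U : H →L[ℂ] H) (hU : IsSelfAdjoint U) (x : H) :
    re (inner ℂ (U (U x)) x : ℂ) = ‖U x‖ ^ 2 := by
  have hsym := (ContinuousLinearMap.isSelfAdjoint_iff_isSymmetric.mp hU) (U x) x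
  simp only [ContinuousLinearMap.coe_coe] at hsym
  rw [hsym, inner_self_eq_norm_sq]

open RCLike ContinuousLinearMap in
private lemma aux_norm_le_one {H : Type*} [NormedAddCommGroup H] [InnerProductSpace ℂ H]
    [CompleteSpace H] (a : H →L[ℂ] H) (ha : IsSelfAdjoint a) (h1 : -1 ≤ a) (h2 : a ≤ 1) :
    ‖a‖ ≤ 1 := by
  by_cases hH : Nontrivial (H →L[ℂ] H)
  · have hs1 : ∀ x ∈ spectrum ℝ a, x ≤ 1 := (CFC.le_one_iff (R := ℝ) a ha).mp h2
    have hs2 : ∀ x ∈ spectrum ℝ a, -1 ≤ x := by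
      have := (algebraMap_le_iff_le_spectrum (R := ℝ) (r := (-1:ℝ)) (a := a) ha)
      rw [map_neg, map_one] at this
      exact this.mp h1
    rcases CStarAlgebra.norm_or_neg_norm_mem_spectrum ha with hm | hm
    · exact hs1 _ hm
    · have := hs2 _ hm; linarith
  · rw [not_nontrivial_iff_subsingleton] at hH
    simp [Subsingleton.elim a 0]

private lemma aux_combo {H : Type*} [NormedAddCommGroup H] [InnerProductSpace ℂ H]
    (x a b : H) (μ : ℝ) (h0 : 0 < μ) (h1 : μ < 1)
    (ha : ‖a‖ ≤ ‖x‖) (hb : ‖b‖ ≤ ‖x‖) (hne : a ≠ b) : ‖μ • a + (1 - μ) • b‖ < ‖x‖ := by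
  letI : InnerProductSpace ℝ H := InnerProductSpace.rclikeToReal ℂ H
  exact norm_combo_lt_of_ne ha hb hne h0 (by linarith) (by ring)

variable {H : Type*} [NormedAddCommGroup H] [InnerProductSpace ℂ H] [CompleteSpace H]

open RCLike ContinuousLinearMap in
theorem extreme_points_unit_ball_selfadjoint (U : H →L[ℂ] H)
    (hU : IsSelfAdjoint U) (hUnorm : ‖U‖ ≤ 1) :
    (∀ T S : H →L[ℂ] H, IsSelfAdjoint T → ‖T‖ ≤ 1 → IsSelfAdjoint S → ‖S‖ ≤ 1 →
        ∀ μ : ℝ, 0 < μ → μ < 1 → U = μ • T + (1 - μ) • S → T = U ∧ S = U) ↔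
      ∃ P : H →L[ℂ] H, IsSelfAdjoint P ∧ IsIdempotentElem P ∧
        U = (2 : ℝ) • P - 1 := by
  have hUx : ∀ x : H, ‖U x‖ ≤ ‖x‖ := fun x =>
    (U.le_opNorm x).trans (by nlinarith [norm_nonneg x])
  have hre : ∀ x : H, |re (inner ℂ (U x) x : ℂ)| ≤ ‖U x‖ * ‖x‖ := fun x =>
    (abs_re_le_norm _).trans (norm_inner_le_norm _ _)
  constructor
  · intro h
    set C : H →L[ℂ] H := (1 : H →L[ℂ] H) - U * U with hC
    set T : H →L[ℂ] H := U + (2⁻¹ : ℝ) • C with hT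
    set S : H →L[ℂ] H := U - (2⁻¹ : ℝ) • C with hS
    have hUU : IsSelfAdjoint (U * U) := by rw [← sq]; exact hU.pow 2
    have hCsa : IsSelfAdjoint C := (IsSelfAdjoint.one (R := H →L[ℂ] H)).sub hUU
    have hsmul : ∀ r : ℝ, ∀ a : H →L[ℂ] H, IsSelfAdjoint a → IsSelfAdjoint (r • a) := by
      intro r a ha
      rw [IsSelfAdjoint, star_smul, star_trivial, ha.star_eq]
    have hTsa : IsSelfAdjoint T := hU.add (hsmul _ _ hCsa)
    have hSsa : IsSelfAdjoint S := hU.sub (hsmul _ _ hCsa)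
    have expand : ∀ x : H, re (inner ℂ (T x) x : ℂ)
        = re (inner ℂ (U x) x : ℂ) + 2⁻¹ * ‖x‖^2 - 2⁻¹ * ‖U x‖^2 := by
      intro x
      simp only [hT, hC, ContinuousLinearMap.sub_apply, ContinuousLinearMap.add_apply,
        ContinuousLinearMap.smul_apply, ContinuousLinearMap.one_apply,
        ContinuousLinearMap.mul_apply, RCLike.real_smul_eq_coe_smul (K := ℂ), inner_smul_left,
        RCLike.conj_ofReal, inner_sub_left, inner_add_left, map_add, map_sub,
        RCLike.re_ofReal_mul, inner_self_eq_norm_sq, aux_extreme U hU]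
      ring
    have expandS : ∀ x : H, re (inner ℂ (S x) x : ℂ)
        = re (inner ℂ (U x) x : ℂ) - 2⁻¹ * ‖x‖^2 + 2⁻¹ * ‖U x‖^2 := by
      intro x
      simp only [hS, hC, ContinuousLinearMap.sub_apply,
        ContinuousLinearMap.smul_apply, ContinuousLinearMap.one_apply,
        ContinuousLinearMap.mul_apply, RCLike.real_smul_eq_coe_smul (K := ℂ), inner_smul_left,
        RCLike.conj_ofReal, inner_sub_left, map_sub,
        RCLike.re_ofReal_mul, inner_self_eq_norm_sq, aux_extreme U hU]
      ring
    have hposbounds : ∀ a : H →L[ℂ] H, IsSelfAdjoint a →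
        (∀ x : H, |re (inner ℂ (a x) x : ℂ)| ≤ ‖x‖^2) → -1 ≤ a ∧ a ≤ 1 := by
      intro a hasa hb
      constructor
      · rw [ContinuousLinearMap.le_def]
        refine ⟨ContinuousLinearMap.isSelfAdjoint_iff_isSymmetric.mp (by simpa using hasa.add (IsSelfAdjoint.one (H →L[ℂ] H))), fun x => ?_⟩
        rw [ContinuousLinearMap.reApplyInnerSelf_apply]
        simp only [sub_neg_eq_add, ContinuousLinearMap.add_apply,
          ContinuousLinearMap.sub_apply, ContinuousLinearMap.neg_apply,
          ContinuousLinearMap.one_apply, inner_add_left, map_add,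
          inner_self_eq_norm_sq]
        have := abs_le.mp (hb x)
        linarith [this.1]
      · rw [ContinuousLinearMap.le_def]
        refine ⟨ContinuousLinearMap.isSelfAdjoint_iff_isSymmetric.mp ((IsSelfAdjoint.one (R := H →L[ℂ] H)).sub hasa), fun x => ?_⟩
        rw [ContinuousLinearMap.reApplyInnerSelf_apply]
        simp only [ContinuousLinearMap.sub_apply, ContinuousLinearMap.one_apply,
          inner_sub_left, map_sub, inner_self_eq_norm_sq]
        have := abs_le.mp (hb x)
        linarith [this.2]
    have hTb : ∀ x : H, |re (inner ℂ (T x) x : ℂ)| ≤ ‖x‖^2 := by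
      intro x
      rw [expand x, abs_le]
      have h1 := abs_le.mp (hre x)
      have h2 := hUx x
      constructor <;> nlinarith [norm_nonneg x, norm_nonneg (U x)]
    have hTnorm : ‖T‖ ≤ 1 :=
      aux_norm_le_one T hTsa (hposbounds T hTsa hTb).1 (hposbounds T hTsa hTb).2
    have hSb : ∀ x : H, |re (inner ℂ (S x) x : ℂ)| ≤ ‖x‖^2 := by
      intro x
      rw [expandS x, abs_le]
      have h1 := abs_le.mp (hre x)
      have h2 := hUx x
      constructor <;> nlinarith [norm_nonneg x, norm_nonneg (U x)]
    have hSnorm : ‖S‖ ≤ 1 :=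
      aux_norm_le_one S hSsa (hposbounds S hSsa hSb).1 (hposbounds S hSsa hSb).2
    have hcomb : U = (2⁻¹ : ℝ) • T + (1 - (2⁻¹:ℝ)) • S := by
      rw [hT, hS]; module
    obtain ⟨hTU, -⟩ := h T S hTsa hTnorm hSsa hSnorm 2⁻¹ (by norm_num) (by norm_num) hcomb
    have hC0 : C = 0 := by
      have : (2⁻¹ : ℝ) • C = 0 := by
        have := hTU
        rw [hT] at this
        calc (2⁻¹ : ℝ) • C = (U + (2⁻¹ : ℝ) • C) - U := by module
        _ = 0 := by rw [this]; simp
      simpa [smul_eq_zero] using this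
    have hU2 : U * U = 1 := by
      have := hC0
      rw [hC, sub_eq_zero] at this
      exact this.symm
    refine ⟨(2⁻¹ : ℝ) • ((1 : H →L[ℂ] H) + U), hsmul _ _ ((IsSelfAdjoint.one (R := H →L[ℂ] H)).add hU), ?_, by module⟩
    show _ * _ = _
    rw [smul_mul_assoc, mul_smul_comm, smul_smul, add_mul, mul_add, mul_add, hU2]
    simp only [one_mul, mul_one]
    module
  · rintro ⟨P, hPsa, hPidem, hUP⟩ T S hTsa hTn hSsa hSn μ hμ0 hμ1 hcomb
    have hU2 : U * U = 1 := by
      rw [hUP, sub_mul, mul_sub, mul_sub, smul_mul_assoc, mul_smul_comm, smul_smul,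
        hPidem.eq]
      simp only [one_mul, mul_one]
      module
    have hUiso : ∀ x : H, ‖U x‖ = ‖x‖ := by
      intro x
      have h1 : re (inner ℂ (U (U x)) x : ℂ) = ‖U x‖ ^ 2 := aux_extreme U hU x
      have h2 : U (U x) = x := by
        rw [← ContinuousLinearMap.mul_apply, hU2, ContinuousLinearMap.one_apply]
      rw [h2, inner_self_eq_norm_sq] at h1
      nlinarith [norm_nonneg x, norm_nonneg (U x)]
    have key : ∀ x : H, T x = U x ∧ S x = U x := by
      intro x
      have hTx : ‖T x‖ ≤ ‖x‖ := (T.le_opNorm x).trans (by nlinarith [norm_nonneg x])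
      have hSx : ‖S x‖ ≤ ‖x‖ := (S.le_opNorm x).trans (by nlinarith [norm_nonneg x])
      have happ : μ • T x + (1 - μ) • S x = U x := by
        rw [hcomb]; simp
      have hTS : T x = S x := by
        by_contra hne
        have hlt : ‖μ • T x + (1 - μ) • S x‖ < ‖x‖ :=
          aux_combo x (T x) (S x) μ hμ0 hμ1 hTx hSx hne
        rw [happ, hUiso x] at hlt
        exact lt_irrefl _ hlt
      have hTU : T x = U x := by
        rw [← happ, ← hTS, ← add_smul]
        simp
      exact ⟨hTU, hTS ▸ hTU⟩
    exact ⟨ContinuousLinearMap.ext fun x => (key x).1,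
      ContinuousLinearMap.ext fun x => (key x).2⟩
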